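/- Let λ ∈ ℝ and α ∈ ℝ with α ≠ 0 and α² ≠ 3/4, and consider the three-dimensional ELKO spinor system (dust case w = 0): x' = -3x + x·[2√3·zx - 3(1-z²-x²-y²) - 6x²]/(2(z²-1)) + (√3/2)z + √(3/2)λy² - αz², y' = y·[2√3·zx - 3(1-z²-x²-y²) - 6x²]/(2(z²-1)) - √(3/2)λxy, z' = (√3/2)x, defined for z² ≠ 1. Then: (i) the origin O = (0,0,0) is an equilibrium, and the Jacobian matrix there has eigenvalues 3/2, (-3+√21)/4 and -(3+√21)/4, hence O is a hyperbolic saddle representing a matter-dominated universe (w_eff = 0); (ii) the point B = (0, 0, √3/(2α)) is an equilibrium, and the Jacobian matrix there has eigenvalues 3/2, (-3+i√3)/4 and (-3-i√3)/4, hence B is an unstable (saddle-focus) equilibrium; both eigenvalue sets are independent of λ and α. -/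

import Mathlib

open Polynomial

/-- The auxiliary quantity `S` of the ELKO spinor system (dust case `w = 0`). -/
noncomputable def S19 (x y z : ℝ) : ℝ :=
  (2 * Real.sqrt 3 * z * x - 3 * (1 - z ^ 2 - x ^ 2 - y ^ 2) - 6 * x ^ 2) / (2 * (z ^ 2 - 1))

/-- `x`-component of the ELKO spinor vector field with coupling `q = αz²`. -/
noncomputable def E19x (lam α x y z : ℝ) : ℝ :=
  -3 * x + x * S19 x y z + Real.sqrt 3 / 2 * z + Real.sqrt (3 / 2) * lam * y ^ 2 - α * z ^ 2

/-- `y`-component of the ELKO spinor vector field. -/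
noncomputable def E19y (lam x y z : ℝ) : ℝ :=
  y * S19 x y z - Real.sqrt (3 / 2) * lam * x * y

/-- `z`-component of the ELKO spinor vector field. -/
noncomputable def E19z (x : ℝ) : ℝ := Real.sqrt 3 / 2 * x

/-- Jacobian matrix of the ELKO spinor system at `(x₀, y₀, z₀)`. -/
noncomputable def jac19 (lam α : ℝ) (x₀ y₀ z₀ : ℝ) : Matrix (Fin 3) (Fin 3) ℝ :=
  !![deriv (fun x => E19x lam α x y₀ z₀) x₀, deriv (fun y => E19x lam α x₀ y z₀) y₀,
       deriv (fun z => E19x lam α x₀ y₀ z) z₀;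
     deriv (fun x => E19y lam x y₀ z₀) x₀, deriv (fun y => E19y lam x₀ y z₀) y₀,
       deriv (fun z => E19y lam x₀ y₀ z) z₀;
     deriv (fun x => E19z x) x₀, deriv (fun _y => E19z x₀) y₀, deriv (fun _z => E19z x₀) z₀]

lemma cubic_deriv19 (a b c d t : ℝ) :
    HasDerivAt (fun x : ℝ => a*x^3 + b*x^2 + c*x + d) (3*a*t^2 + 2*b*t + c) t := by
  have h3 := (hasDerivAt_pow 3 t).const_mul a
  have h2 := (hasDerivAt_pow 2 t).const_mul b
  have h1 := (hasDerivAt_id t).const_mul c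
  have := ((h3.add h2).add h1).add_const d
  simp only [Pi.add_apply, id_eq] at this
  exact this.congr_deriv (by push_cast; ring)

lemma jac_eval19 (lam α z₀ : ℝ) (hz : z₀ ^ 2 ≠ 1) :
    jac19 lam α 0 0 z₀ =
      !![-(3/2), 0, Real.sqrt 3 / 2 - 2*α*z₀; 0, 3/2, 0; Real.sqrt 3 / 2, 0, 0] := by
  have hd : (2*(z₀^2-1)) ≠ 0 := mul_ne_zero two_ne_zero (sub_ne_zero.mpr hz)
  have e11 : deriv (fun x => E19x lam α x 0 z₀) 0 = -(3/2) := by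
    have hfun : (fun x => E19x lam α x 0 z₀) = fun x =>
        ((-3)*x^3 + (2*Real.sqrt 3*z₀)*x^2 + (-3*(1-z₀^2))*x + 0) / (2*(z₀^2-1)) +
          ((-3)*x + (Real.sqrt 3 / 2 * z₀ + Real.sqrt (3/2) * lam * 0^2 - α * z₀^2)) := by
      funext x; simp only [E19x, S19]; field_simp; ring
    rw [hfun]
    have h1 := (cubic_deriv19 (-3) (2*Real.sqrt 3*z₀) (-3*(1-z₀^2)) 0 0).div_const (2*(z₀^2-1))
    have h2 := ((hasDerivAt_id (0:ℝ)).const_mul (-3)).add_const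
      (Real.sqrt 3 / 2 * z₀ + Real.sqrt (3/2) * lam * 0^2 - α * z₀^2)
    have := (h1.add h2).deriv
    simp only [id_eq, Pi.add_def] at this
    rw [this]; field_simp; ring
  have e12 : deriv (fun y => E19x lam α 0 y z₀) 0 = 0 := by
    have hfun : (fun y => E19x lam α 0 y z₀) = fun y =>
        (Real.sqrt (3/2) * lam) * y^2 + (Real.sqrt 3 / 2 * z₀ - α * z₀^2) := by
      funext y; simp only [E19x, S19]; ring
    rw [hfun]
    have := (((hasDerivAt_pow 2 (0:ℝ)).const_mul (Real.sqrt (3/2) * lam)).add_const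
      (Real.sqrt 3 / 2 * z₀ - α * z₀^2)).deriv
    rw [this]; ring
  have e13 : deriv (fun z => E19x lam α 0 0 z) z₀ = Real.sqrt 3 / 2 - 2*α*z₀ := by
    have hfun : (fun z => E19x lam α 0 0 z) = fun z =>
        (-α) * z^2 + (Real.sqrt 3 / 2) * z + 0 := by
      funext z; simp only [E19x, S19]; ring
    rw [hfun]
    have := ((((hasDerivAt_pow 2 z₀).const_mul (-α)).add
      ((hasDerivAt_id z₀).const_mul (Real.sqrt 3 / 2))).add_const 0).deriv
    simp only [id_eq, Pi.add_apply] at this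
    rw [this]; push_cast; ring
  have e21 : deriv (fun x => E19y lam x 0 z₀) 0 = 0 := by
    have hfun : (fun x => E19y lam x 0 z₀) = fun _ => (0:ℝ) := by
      funext x; simp [E19y]
    rw [hfun]; exact deriv_const _ _
  have e22 : deriv (fun y => E19y lam 0 y z₀) 0 = 3/2 := by
    have hfun : (fun y => E19y lam 0 y z₀) = fun y =>
        ((3:ℝ)*y^3 + 0*y^2 + (-3*(1-z₀^2))*y + 0) / (2*(z₀^2-1)) := by
      funext y; simp only [E19y, S19]; field_simp; ring
    rw [hfun]
    have := ((cubic_deriv19 3 0 (-3*(1-z₀^2)) 0 0).div_const (2*(z₀^2-1))).deriv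
    rw [this]; field_simp; ring
  have e23 : deriv (fun z => E19y lam 0 0 z) z₀ = 0 := by
    have hfun : (fun z => E19y lam 0 0 z) = fun _ => (0:ℝ) := by
      funext z; simp [E19y]
    rw [hfun]; exact deriv_const _ _
  have e31 : deriv (fun x => E19z x) 0 = Real.sqrt 3 / 2 := by
    have := ((hasDerivAt_id (0:ℝ)).const_mul (Real.sqrt 3 / 2)).deriv
    simpa [E19z] using this
  simp only [jac19, e11, e12, e13, e21, e22, e23, e31, deriv_const']

lemma charpoly_O19 :
    (!![-(3/2), 0, Real.sqrt 3 / 2; 0, 3/2, 0; Real.sqrt 3 / 2, 0, 0] :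
        Matrix (Fin 3) (Fin 3) ℝ).charpoly
      = (X - C (3 / 2)) * (X - C ((-3 + Real.sqrt 21) / 4))
          * (X - C ((-3 - Real.sqrt 21) / 4)) := by
  have h21 : Real.sqrt 21 * Real.sqrt 21 = 21 := Real.mul_self_sqrt (by norm_num)
  have h3 : Real.sqrt 3 * Real.sqrt 3 = 3 := Real.mul_self_sqrt (by norm_num)
  rw [Matrix.charpoly, Matrix.det_fin_three]
  simp only [Matrix.charmatrix_apply, Matrix.diagonal_apply, Matrix.cons_val', Matrix.cons_val_zero,
    Matrix.cons_val_one, Matrix.head_cons, Matrix.empty_val', Matrix.cons_val_fin_one,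
    Matrix.cons_val_two, Matrix.tail_cons, Matrix.vecHead, Matrix.vecTail,
    show ((0:Fin 3) = 2) = False by simp, show ((2:Fin 3) = 0) = False by simp,
    show ((2:Fin 3) = 1) = False by simp, show ((1:Fin 3) = 2) = False by simp,
    if_false, if_true, Function.comp]
  norm_num
  apply Polynomial.funext
  intro r
  simp only [eval_mul, eval_add, eval_sub, eval_neg, eval_X, eval_C, eval_ofNat]
  norm_num [Matrix.vecHead, Matrix.vecTail]
  rw [show (2 : Fin 3) = Fin.succ 1 from rfl]
  simp only [Matrix.cons_val_succ, Matrix.cons_val_one, Matrix.head_cons, Matrix.cons_val_fin_one, Matrix.cons_val_zero]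
  linear_combination ((r - 3/2)/16) * h21 - ((r - 3/2)/4) * h3

lemma charpoly_B19 :
    ((!![-(3/2), 0, -(Real.sqrt 3 / 2); 0, 3/2, 0; Real.sqrt 3 / 2, 0, 0] :
        Matrix (Fin 3) (Fin 3) ℝ).map Complex.ofReal).charpoly
      = (X - C (3 / 2)) * (X - C ((-3 + Complex.I * (Real.sqrt 3 : ℂ)) / 4))
          * (X - C ((-3 - Complex.I * (Real.sqrt 3 : ℂ)) / 4)) := by
  have h3 : ((Real.sqrt 3 : ℝ) : ℂ) * ((Real.sqrt 3 : ℝ) : ℂ) = 3 := by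
    rw [← Complex.ofReal_mul, Real.mul_self_sqrt (by norm_num)]; norm_num
  have hI : Complex.I * Complex.I = -1 := Complex.I_mul_I
  rw [Matrix.charpoly, Matrix.det_fin_three]
  simp only [Matrix.charmatrix_apply, Matrix.diagonal_apply, Matrix.map_apply,
    Matrix.cons_val', Matrix.cons_val_zero,
    Matrix.cons_val_one, Matrix.head_cons, Matrix.empty_val', Matrix.cons_val_fin_one,
    Matrix.cons_val_two, Matrix.tail_cons, Matrix.vecHead, Matrix.vecTail,
    show ((0:Fin 3) = 2) = False by simp, show ((2:Fin 3) = 0) = False by simp,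
    show ((2:Fin 3) = 1) = False by simp, show ((1:Fin 3) = 2) = False by simp,
    if_false, if_true, Function.comp]
  norm_num
  apply Polynomial.funext
  intro r
  simp only [eval_mul, eval_add, eval_sub, eval_neg, eval_X, eval_C, eval_ofNat]
  norm_num [Matrix.vecHead, Matrix.vecTail]
  rw [show (2 : Fin 3) = Fin.succ 1 from rfl]
  simp only [Matrix.cons_val_succ, Matrix.cons_val_one, Matrix.head_cons, Matrix.cons_val_fin_one, Matrix.cons_val_zero]
  push_cast
  linear_combination (r/4 - 3/8 + Complex.I*Complex.I*(r/16 - 3/32)) * h3 + (3*r/16 - 9/32) * hI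

/-- ELKO spinor dark energy with coupling `q = αz²` (dust case): the origin `O` and the point
`B = (0, 0, √3/(2α))` are equilibria; the Jacobian at `O` has eigenvalues
`3/2, (-3+√21)/4, -(3+√21)/4` (hyperbolic saddle, matter dominated), and the Jacobian at `B`
has eigenvalues `3/2, (-3±i√3)/4` (unstable saddle-focus); both eigenvalue sets are
independent of `λ` and `α`. -/
theorem elko_spinor_critical_points (lam α : ℝ) (hα : α ≠ 0) (hα2 : α ^ 2 ≠ 3 / 4) :
    (E19x lam α 0 0 0 = 0 ∧ E19y lam 0 0 0 = 0 ∧ E19z 0 = 0) ∧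
    (E19x lam α 0 0 (Real.sqrt 3 / (2 * α)) = 0 ∧
      E19y lam 0 0 (Real.sqrt 3 / (2 * α)) = 0 ∧ E19z 0 = 0) ∧
    (jac19 lam α 0 0 0).charpoly
      = (X - C (3 / 2)) * (X - C ((-3 + Real.sqrt 21) / 4))
          * (X - C ((-3 - Real.sqrt 21) / 4)) ∧
    ((jac19 lam α 0 0 (Real.sqrt 3 / (2 * α))).map Complex.ofReal).charpoly
      = (X - C (3 / 2)) * (X - C ((-3 + Complex.I * (Real.sqrt 3 : ℂ)) / 4))
          * (X - C ((-3 - Complex.I * (Real.sqrt 3 : ℂ)) / 4)) := by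
  have h3 : Real.sqrt 3 * Real.sqrt 3 = 3 := Real.mul_self_sqrt (by norm_num)
  have hzB : (Real.sqrt 3 / (2 * α)) ^ 2 ≠ 1 := by
    intro h
    apply hα2
    have h4 : (Real.sqrt 3)^2 = (2*α)^2 := by
      field_simp [div_pow] at h
      linarith [h]
    nlinarith [h4, h3]
  refine ⟨⟨?_, ?_, ?_⟩, ⟨?_, ?_, ?_⟩, ?_, ?_⟩
  · simp [E19x, S19]
  · simp [E19y]
  · simp [E19z]
  · simp only [E19x, S19]
    field_simp
    ring_nf
  · simp [E19y]
  · simp [E19z]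
  · rw [jac_eval19 lam α 0 (by norm_num)]
    simpa using charpoly_O19
  · rw [jac_eval19 lam α _ hzB]
    have hentry : Real.sqrt 3 / 2 - 2*α*(Real.sqrt 3 / (2 * α)) = -(Real.sqrt 3 / 2) := by
      field_simp
      ring
    rw [hentry]
    exact charpoly_B19
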